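/- Let λ > 0, α0 > 1, and 0 < s < α0 − 1. Let A be a random variable such that A − 1 is Gamma-distributed with shape (α0 − 1)²/s² and rate (α0 − 1)/s² (so that E[A − 1] = α0 − 1 and Var(A − 1) = s²). Then E[ λ·A/(A − 1) ] = λ·α0/(α0 − 1) + λ·s²/((α0 − 1)(α0 − s − 1)(α0 + s − 1)). In particular the stochastic-exponent mean exceeds the constant-exponent mean λα0/(α0 − 1) by the strictly positive quantity λ s²/((α0 − 1)(α0 − s − 1)(α0 + s − 1)). -/

import Mathlib

open MeasureTheory ProbabilityTheory Real Set
open scoped ENNReal NNReal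

lemma integrableOn_rpow_exp' {s b : ℝ} (hs : -1 < s) (hb : 0 < b) :
    IntegrableOn (fun x : ℝ => x ^ s * exp (-(b * x))) (Set.Ioi 0) := by
  have h := integrableOn_rpow_mul_exp_neg_mul_rpow hs zero_lt_one hb
  refine h.congr_fun (fun x hx => ?_) measurableSet_Ioi
  simp only [rpow_one]; ring_nf

lemma gamma_core {k r lam : ℝ} (hk : 1 < k) (hr : 0 < r) :
    ∫ y, lam * (y + 1) / y ∂gammaMeasure k r = lam * (1 + r / (k - 1)) := by
  have hk0 : 0 < k := by linarith
  have hk1 : (0:ℝ) < k - 1 := by linarith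
  have hΓ : 0 < Gamma k := Gamma_pos_of_pos hk0
  set C : ℝ := r ^ k / Gamma k with hC
  set F : ℝ → ℝ := fun x => gammaPDFReal k r x * (lam * (x + 1) / x) with hF
  have hF0 : ∀ x, x ∉ Set.Ioi (0:ℝ) → F x = 0 := by
    intro x hx
    rcases lt_or_eq_of_le (not_lt.mp (by simpa using hx)) with h | h
    · simp [hF, gammaPDFReal, not_le.mpr h]
    · subst h; simp [hF]
  have hFeq : ∀ x ∈ Set.Ioi (0:ℝ), F x
      = lam * C * (x ^ (k - 1) * exp (-(r * x)))
        + lam * C * (x ^ (k - 1 - 1) * exp (-(r * x))) := by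
    intro x hx
    have hx0 : (0:ℝ) < x := hx
    have hxp : x ^ (k - 1 - 1) = x ^ (k - 1) / x := by
      rw [rpow_sub hx0, rpow_one]
    simp only [hF, gammaPDFReal, if_pos hx0.le, hxp, ← hC]
    field_simp
  have hi1 : IntegrableOn (fun x : ℝ => x ^ (k - 1) * exp (-(r * x))) (Set.Ioi 0) :=
    integrableOn_rpow_exp' (by linarith) hr
  have hi2 : IntegrableOn (fun x : ℝ => x ^ (k - 1 - 1) * exp (-(r * x))) (Set.Ioi 0) :=
    integrableOn_rpow_exp' (by linarith) hr
  have hFint : IntegrableOn F (Set.Ioi 0) := by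
    exact IntegrableOn.congr_fun ((hi1.const_mul (lam * C)).add (hi2.const_mul (lam * C)))
      (fun x hx => (hFeq x hx).symm) measurableSet_Ioi
  -- value of the set integral
  have hval : ∫ x in Set.Ioi (0:ℝ), F x = lam * (1 + r / (k - 1)) := by
    rw [setIntegral_congr_fun measurableSet_Ioi hFeq,
      integral_add (hi1.const_mul _) (hi2.const_mul _), integral_const_mul, integral_const_mul,
      integral_rpow_mul_exp_neg_mul_Ioi hk0 hr,
      integral_rpow_mul_exp_neg_mul_Ioi hk1 hr]
    have hΓ' : Gamma k = (k - 1) * Gamma (k - 1) := by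
      rw [show k = k - 1 + 1 by ring, Gamma_add_one (by linarith)]
      ring_nf
    have hΓ1 : 0 < Gamma (k - 1) := Gamma_pos_of_pos hk1
    have hrk : (0:ℝ) < r ^ k := rpow_pos_of_pos hr _
    have hrk1 : (0:ℝ) < r ^ (k - 1) := rpow_pos_of_pos hr _
    have hrr : r ^ k = r ^ (k - 1) * r := by
      rw [← rpow_add_one hr.ne']; ring_nf
    rw [hC, hΓ', one_div, inv_rpow hr.le, inv_rpow hr.le, hrr]
    field_simp
  -- assemble
  have hpdf : ∀ x : ℝ, gammaPDF k r x = ((gammaPDFReal k r x).toNNReal : ℝ≥0∞) := fun _ => rfl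
  have hmeas : Measurable fun x => (gammaPDFReal k r x).toNNReal :=
    (measurable_gammaPDFReal k r).real_toNNReal
  rw [gammaMeasure,
    show gammaPDF k r = fun x => ((gammaPDFReal k r x).toNNReal : ℝ≥0∞) from rfl,
    integral_withDensity_eq_integral_smul hmeas]
  have hnn : ∀ x, ((gammaPDFReal k r x).toNNReal : ℝ) = gammaPDFReal k r x :=
    fun x => Real.coe_toNNReal _ (gammaPDFReal_nonneg hk0 hr x)
  calc ∫ x, (gammaPDFReal k r x).toNNReal • (lam * (x + 1) / x)
      = ∫ x, F x := by
        congr 1; funext x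
        rw [NNReal.smul_def, smul_eq_mul, hnn]
    _ = ∫ x in Set.Ioi (0:ℝ), F x :=
        (setIntegral_eq_integral_of_forall_compl_eq_zero hF0).symm
    _ = lam * (1 + r / (k - 1)) := hval


/-- Mean of a Pareto variable with Gamma-distributed stochastic tail exponent: if
`A - 1 ~ Gamma(shape (α₀-1)²/s², rate (α₀-1)/s²)` (so `E[A-1] = α₀-1`,
`Var(A-1) = s²`) with `0 < s < α₀ - 1` and `A > 1` a.s., then
`E[λ·A/(A-1)] = λα₀/(α₀-1) + λs²/((α₀-1)(α₀-s-1)(α₀+s-1))`,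
and that excess over the constant-exponent mean is strictly positive. -/
theorem gamma_exponent_mean {Ω : Type*} [MeasurableSpace Ω] (P : Measure Ω)
    [IsProbabilityMeasure P] (lam α₀ s : ℝ) (hlam : 0 < lam) (hα₀ : 1 < α₀)
    (hs : 0 < s) (hs' : s < α₀ - 1)
    (A : Ω → ℝ) (hA : Measurable A) (hgt : ∀ᵐ ω ∂P, 1 < A ω)
    (hlaw : Measure.map (fun ω => A ω - 1) P
      = gammaMeasure ((α₀ - 1) ^ 2 / s ^ 2) ((α₀ - 1) / s ^ 2)) :
    ∫ ω, lam * A ω / (A ω - 1) ∂P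
        = lam * α₀ / (α₀ - 1)
          + lam * s ^ 2 / ((α₀ - 1) * (α₀ - s - 1) * (α₀ + s - 1)) ∧
    0 < lam * s ^ 2 / ((α₀ - 1) * (α₀ - s - 1) * (α₀ + s - 1)) := by
  have hd1 : (0:ℝ) < α₀ - 1 := by linarith
  have hd2 : (0:ℝ) < α₀ - s - 1 := by linarith
  have hd3 : (0:ℝ) < α₀ + s - 1 := by linarith
  constructor
  · set k : ℝ := (α₀ - 1) ^ 2 / s ^ 2 with hkdef
    set r : ℝ := (α₀ - 1) / s ^ 2 with hrdef
    have hs2 : (0:ℝ) < s ^ 2 := by positivity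
    have hk : 1 < k := by
      rw [hkdef, lt_div_iff₀ hs2, one_mul]
      nlinarith
    have hr : 0 < r := by positivity
    have hfmeas : Measurable fun y : ℝ => lam * (y + 1) / y :=
      (measurable_const.mul (measurable_id.add_const 1)).div measurable_id
    have h1 : ∫ ω, lam * A ω / (A ω - 1) ∂P
        = ∫ y, lam * (y + 1) / y ∂gammaMeasure k r := by
      rw [← hlaw, integral_map (φ := fun ω => A ω - 1) (hA.sub measurable_const).aemeasurable
        hfmeas.aestronglyMeasurable]
      congr 1; funext ω; rw [sub_add_cancel]
    have h2 : (α₀ - 1) ^ 2 / s ^ 2 - 1 = (α₀ - s - 1) * (α₀ + s - 1) / s ^ 2 := by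
      field_simp
      ring
    rw [h1, gamma_core hk hr, hkdef, hrdef, h2]
    have hne1 : α₀ - 1 ≠ 0 := hd1.ne'
    have hne2 : α₀ - s - 1 ≠ 0 := hd2.ne'
    have hne3 : α₀ + s - 1 ≠ 0 := hd3.ne'
    field_simp
    ring
  · exact div_pos (by positivity) (mul_pos (mul_pos hd1 hd2) hd3)
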